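/- arXiv:2007.04753 — 3 statements merged into one kernel-verified Lean document; each statement's English description precedes it below -/
import Mathlib

section
/- For k₀ = 1 - e^{-α₀} with α₀ ≠ 0 and for all t with k₀e^{ct} < 1, the function x(t) = [ (1/(ck₀)) log((1-k₀)/(1-k₀e^{ct})) + 1/(e^{-ct}-k₀) - 1/(1-k₀) ] (e^{-ct} - k₀) satisfies x(0) = 0 and x'(t) = 1 + c(1 - x(t)) e^{α(t)}, where α(t) = -log(1 - k₀e^{ct}). -/
theorem hamilton_x_solution (c α₀ : ℝ) (hc : 0 < c) (hα₀ : α₀ ≠ 0)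
    (k₀ : ℝ) (hk₀ : k₀ = 1 - Real.exp (-α₀))
    (a : ℝ → ℝ) (ha : ∀ t, a t = -Real.log (1 - k₀ * Real.exp (c * t)))
    (x : ℝ → ℝ)
    (hx : ∀ t, x t =
      ((1 / (c * k₀)) * Real.log ((1 - k₀) / (1 - k₀ * Real.exp (c * t)))
        + 1 / (Real.exp (-(c * t)) - k₀) - 1 / (1 - k₀)) * (Real.exp (-(c * t)) - k₀)) :
    x 0 = 0 ∧
    ∀ t, k₀ * Real.exp (c * t) < 1 →
      HasDerivAt x (1 + c * (1 - x t) * Real.exp (a t)) t := by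
  have hek : (1:ℝ) - k₀ = Real.exp (-α₀) := by rw [hk₀]; ring
  have h1k : (0:ℝ) < 1 - k₀ := hek ▸ Real.exp_pos _
  have hk0 : k₀ ≠ 0 := by
    intro h
    apply hα₀
    have h1 : Real.exp (-α₀) = 1 := by rw [← hek, h]; ring
    have h2 : Real.exp (-α₀) = Real.exp 0 := by simpa using h1
    have := Real.exp_injective h2
    linarith
  constructor
  · rw [hx]; norm_num [div_self h1k.ne']
  · intro t ht
    have hDt : (0:ℝ) < 1 - k₀ * Real.exp (c * t) := by linarith
    have hmul : Real.exp (-(c*t)) * Real.exp (c*t) = 1 := by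
      rw [← Real.exp_add]; simp
    have hut : (0:ℝ) < Real.exp (-(c*t)) - k₀ := by
      have h1 : Real.exp (-(c*t)) - k₀ = Real.exp (-(c*t)) * (1 - k₀ * Real.exp (c*t)) := by
        rw [mul_sub, mul_one, ← mul_assoc, mul_comm (Real.exp (-(c*t))) k₀, mul_assoc, hmul, mul_one]
      rw [h1]; positivity
    set g : ℝ → ℝ := fun s =>
      ((1/(c*k₀)) * (Real.log (1-k₀) - Real.log (1 - k₀ * Real.exp (c*s)))
        + (Real.exp (-(c*s)) - k₀)⁻¹ - 1/(1-k₀)) * (Real.exp (-(c*s)) - k₀) with hg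
    have hev : x =ᶠ[nhds t] g := by
      have hcont : Continuous fun s => 1 - k₀ * Real.exp (c*s) := by continuity
      have hnb : ∀ᶠ s in nhds t, 0 < 1 - k₀ * Real.exp (c*s) :=
        hcont.continuousAt.eventually_mem (Ioi_mem_nhds hDt)
      filter_upwards [hnb] with s hs
      rw [hx s, hg]
      rw [Real.log_div h1k.ne' hs.ne']
      simp [one_div]
    -- derivatives
    have hlin : HasDerivAt (fun y : ℝ => c * y) c t := by
      simpa using (hasDerivAt_id t).const_mul c
    have hE : HasDerivAt (fun s => Real.exp (c*s)) (Real.exp (c*t) * c) t := hlin.exp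
    have hlin2 : HasDerivAt (fun y : ℝ => -(c * y)) (-c) t := hlin.neg
    have hF : HasDerivAt (fun s => Real.exp (-(c*s))) (Real.exp (-(c*t)) * (-c)) t := hlin2.exp
    have hDd : HasDerivAt (fun s => 1 - k₀ * Real.exp (c*s)) (-(k₀ * (Real.exp (c*t) * c))) t :=
      (hE.const_mul k₀).const_sub 1
    have hlog : HasDerivAt (fun s => Real.log (1 - k₀ * Real.exp (c*s)))
        (-(k₀ * (Real.exp (c*t) * c)) / (1 - k₀ * Real.exp (c*t))) t := hDd.log hDt.ne'
    have hL : HasDerivAt (fun s => Real.log (1-k₀) - Real.log (1 - k₀ * Real.exp (c*s)))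
        (-(-(k₀ * (Real.exp (c*t) * c)) / (1 - k₀ * Real.exp (c*t)))) t :=
      hlog.const_sub _
    have hu : HasDerivAt (fun s => Real.exp (-(c*s)) - k₀) (Real.exp (-(c*t)) * (-c)) t :=
      hF.sub_const k₀
    have hinv : HasDerivAt (fun s => (Real.exp (-(c*s)) - k₀)⁻¹)
        (-(Real.exp (-(c*t)) * (-c)) / (Real.exp (-(c*t)) - k₀)^2) t := hu.inv hut.ne'
    have hg1 := (((hL.const_mul (1/(c*k₀))).add hinv).sub_const (1/(1-k₀))).mul hu
    have hgd : HasDerivAt g _ t := hg1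
    refine (hgd.congr_of_eventuallyEq hev).congr_deriv ?_
    simp only [Pi.add_apply]
    -- value equality
    have hexp_a : Real.exp (a t) = (1 - k₀ * Real.exp (c*t))⁻¹ := by
      rw [ha t, Real.exp_neg, Real.exp_log hDt]
    rw [hexp_a, hx t, Real.log_div h1k.ne' hDt.ne']
    have hEpos := Real.exp_pos (c*t)
    have hinvE : Real.exp (-(c*t)) = (Real.exp (c*t))⁻¹ := Real.exp_neg _
    rw [hinvE] at hut ⊢
    clear hg1 hgd hinv hu hL hlog hDd hF hlin2 hE hlin hev hg g hexp_a hmul hx ha hk₀ hek hα₀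
    set E := Real.exp (c*t) with hEdef
    set L1 := Real.log (1-k₀) with hL1
    set L2 := Real.log (1 - k₀*E) with hL2
    clear_value E L1 L2
    have hE0 : E ≠ 0 := hEpos.ne'
    have hD0 : (1:ℝ) - k₀ * E ≠ 0 := hDt.ne'
    have hsub : E⁻¹ - k₀ = (1 - k₀*E)/E := by field_simp
    rw [hsub]
    have hq : (1 - k₀*E)/E ≠ 0 := div_ne_zero hD0 hE0
    field_simp
    ring
end

section
/- The map α₀ ↦ x_{α₀}(t) is strictly monotone increasing in the initial condition: if α₀ < α₁ and x_{α₀}, x_{α₁} are the solutions of the Hamilton system x' = 1 + c(1-x)e^α, α' = c(e^α - 1) with x(0) = 0 and respective initial conditions α(0) = α₀, α(0) = α₁, then x_{α₀}(t) < x_{α₁}(t) for all t > 0 while both remain below 1; consequently, the hitting times satisfy T_{α₀} > T_{α₁}. -/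
open Real Set

private lemma const_on_Ici {f : ℝ → ℝ} (hf : ∀ s, 0 ≤ s → HasDerivAt f 0 s)
    {t : ℝ} (ht : 0 ≤ t) : f t = f 0 := by
  have hc : ContinuousOn f (Icc 0 t) := fun s hs => (hf s hs.1).continuousAt.continuousWithinAt
  exact constant_of_has_deriv_right_zero hc
    (fun s hs => (hf s hs.1).hasDerivWithinAt) t ⟨ht, le_rfl⟩

private lemma exp_neg_formula {c : ℝ} (a : ℝ → ℝ)
    (ha : ∀ s, 0 ≤ s → HasDerivAt a (c * (Real.exp (a s) - 1)) s)
    {t : ℝ} (ht : 0 ≤ t) :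
    Real.exp (-(a t)) - 1 = (Real.exp (-(a 0)) - 1) * Real.exp (c * t) := by
  have hder : ∀ s, 0 ≤ s →
      HasDerivAt (fun u => (Real.exp (-(a u)) - 1) * Real.exp (-(c * u))) 0 s := by
    intro s hs
    have h1 : HasDerivAt (fun u => Real.exp (-(a u)) - 1)
        (c * (Real.exp (-(a s)) - 1)) s := by
      have h2 := ((ha s hs).fun_neg.exp).sub_const 1
      refine h2.congr_deriv ?_
      rw [Real.exp_neg]
      have hE := Real.exp_ne_zero (a s)
      field_simp
      ring
    have h3 : HasDerivAt (fun u => Real.exp (-(c * u))) (-c * Real.exp (-(c * s))) s := by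
      have h4 : HasDerivAt (fun u : ℝ => -(c * u)) (-c) s := by
        simpa using ((hasDerivAt_id' s).const_mul c).fun_neg
      simpa [mul_comm] using h4.exp
    have := h1.fun_mul h3
    refine this.congr_deriv ?_
    ring
  have hconst := const_on_Ici hder ht
  simp only [mul_zero, neg_zero, Real.exp_zero, mul_one] at hconst
  have hE : Real.exp (-(c * t)) = (Real.exp (c * t))⁻¹ := by
    rw [← Real.exp_neg]
  rw [hE] at hconst
  have hpos := Real.exp_pos (c * t)
  field_simp at hconst
  linarith [hconst]

theorem monotonicity_in_initial_condition (c α₀ α₁ : ℝ) (hc : 0 < c) (h01 : α₀ < α₁)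
    (x₀ a₀ x₁ a₁ : ℝ → ℝ)
    (hx₀0 : x₀ 0 = 0) (ha₀0 : a₀ 0 = α₀) (hx₁0 : x₁ 0 = 0) (ha₁0 : a₁ 0 = α₁)
    (hx₀ : ∀ t, 0 ≤ t → HasDerivAt x₀ (1 + c * (1 - x₀ t) * Real.exp (a₀ t)) t)
    (ha₀ : ∀ t, 0 ≤ t → HasDerivAt a₀ (c * (Real.exp (a₀ t) - 1)) t)
    (hx₁ : ∀ t, 0 ≤ t → HasDerivAt x₁ (1 + c * (1 - x₁ t) * Real.exp (a₁ t)) t)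
    (ha₁ : ∀ t, 0 ≤ t → HasDerivAt a₁ (c * (Real.exp (a₁ t) - 1)) t) :
    (∀ t, 0 < t → (∀ s, 0 ≤ s → s ≤ t → x₀ s < 1 ∧ x₁ s < 1) → x₀ t < x₁ t) ∧
    sInf {t : ℝ | 0 ≤ t ∧ 1 ≤ x₁ t} < sInf {t : ℝ | 0 ≤ t ∧ 1 ≤ x₀ t} := by
  -- Step 1: a₀ < a₁ on [0, ∞)
  have hA : ∀ s, 0 ≤ s → a₀ s < a₁ s := by
    intro s hs
    have e0 := exp_neg_formula a₀ ha₀ hs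
    have e1 := exp_neg_formula a₁ ha₁ hs
    rw [ha₀0] at e0; rw [ha₁0] at e1
    have hexp : Real.exp (-α₁) < Real.exp (-α₀) := Real.exp_lt_exp.2 (by linarith)
    have hct := Real.exp_pos (c * s)
    have hlt : Real.exp (-(a₁ s)) < Real.exp (-(a₀ s)) := by nlinarith
    have := Real.exp_lt_exp.1 hlt
    linarith
  -- Step 2: key comparison lemma (open version)
  have key : ∀ t, 0 < t → (∀ s, 0 ≤ s → s < t → x₀ s < 1 ∧ x₁ s < 1) → x₀ t < x₁ t := by
    intro t ht hlt1
    set g : ℝ → ℝ := fun s => (x₁ s - x₀ s) * Real.exp (a₀ s + c * s) with hg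
    have hder : ∀ s, 0 ≤ s → HasDerivAt g
        ((c * (1 - x₁ s) * (Real.exp (a₁ s) - Real.exp (a₀ s))) * Real.exp (a₀ s + c * s)) s := by
      intro s hs
      have d1 := (hx₁ s hs).fun_sub (hx₀ s hs)
      have d2 : HasDerivAt (fun u => Real.exp (a₀ u + c * u))
          ((c * (Real.exp (a₀ s) - 1) + c * 1) * Real.exp (a₀ s + c * s)) s := by
        have := ((ha₀ s hs).add ((hasDerivAt_id' s).const_mul c)).exp
        simpa [mul_comm] using this
      have := d1.fun_mul d2
      refine this.congr_deriv ?_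
      ring
    have hmono : StrictMonoOn g (Icc 0 t) := by
      apply strictMonoOn_of_deriv_pos (convex_Icc 0 t)
      · exact fun s hs => (hder s hs.1).continuousAt.continuousWithinAt
      · intro s hs
        rw [interior_Icc] at hs
        rw [(hder s hs.1.le).deriv]
        have hx1s := (hlt1 s hs.1.le hs.2).2
        have has := hA s hs.1.le
        have h1 : 0 < 1 - x₁ s := by linarith
        have h2 : 0 < Real.exp (a₁ s) - Real.exp (a₀ s) := by
          have := Real.exp_lt_exp.2 has; linarith
        positivity
    have hgt := hmono ⟨le_rfl, ht.le⟩ ⟨ht.le, le_rfl⟩ ht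
    have hg0 : g 0 = 0 := by simp [hg, hx₀0, hx₁0]
    rw [hg0] at hgt
    simp only [hg] at hgt
    have hE := Real.exp_pos (a₀ t + c * t)
    by_contra hge
    push_neg at hge
    have := mul_nonpos_of_nonpos_of_nonneg (by linarith : x₁ t - x₀ t ≤ 0) hE.le
    linarith
  refine ⟨fun t ht h => key t ht (fun s hs hst => h s hs hst.le), ?_⟩
  -- Step 3: hitting times
  set S₀ : Set ℝ := {t : ℝ | 0 ≤ t ∧ 1 ≤ x₀ t} with hS₀
  set S₁ : Set ℝ := {t : ℝ | 0 ≤ t ∧ 1 ≤ x₁ t} with hS₁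
  have hbdd₀ : BddBelow S₀ := ⟨0, fun s hs => hs.1⟩
  have hbdd₁ : BddBelow S₁ := ⟨0, fun s hs => hs.1⟩
  -- nonemptiness
  have hits : ∀ (x a : ℝ → ℝ), x 0 = 0 →
      (∀ s, 0 ≤ s → HasDerivAt x (1 + c * (1 - x s) * Real.exp (a s)) s) →
      {t : ℝ | 0 ≤ t ∧ 1 ≤ x t}.Nonempty := by
    intro x a hx0 hx
    by_contra hne
    push_neg at hne
    simp only [Set.not_nonempty_iff_eq_empty, Set.eq_empty_iff_forall_notMem,
      Set.mem_setOf_eq, not_and, not_le] at hne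
    have hmono : MonotoneOn (fun s => x s - s) (Icc (0:ℝ) 2) := by
      apply monotoneOn_of_deriv_nonneg (convex_Icc 0 2)
      · exact fun s hs => ((hx s hs.1).sub (hasDerivAt_id' s)).continuousAt.continuousWithinAt
      · intro s hs
        rw [interior_Icc] at hs
        exact ((hx s hs.1.le).sub (hasDerivAt_id' s)).differentiableAt.differentiableWithinAt
      · intro s hs
        rw [interior_Icc] at hs
        rw [((hx s hs.1.le).fun_sub (hasDerivAt_id' s)).deriv]
        have hxs := hne s hs.1.le
        have := Real.exp_pos (a s)
        nlinarith [mul_pos (mul_pos hc (show (0:ℝ) < 1 - x s by linarith)) this]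
    have h2 := hmono (Set.left_mem_Icc.2 (by norm_num)) (Set.right_mem_Icc.2 (by norm_num))
      (by norm_num)
    simp only [hx0] at h2
    have := hne 2 (by norm_num)
    linarith
  have hne₀ : S₀.Nonempty := hits x₀ a₀ hx₀0 hx₀
  have hne₁ : S₁.Nonempty := hits x₁ a₁ hx₁0 hx₁
  -- closedness and membership of sInf
  have hclosed : ∀ (x a : ℝ → ℝ),
      (∀ s, 0 ≤ s → HasDerivAt x (1 + c * (1 - x s) * Real.exp (a s)) s) →
      IsClosed {t : ℝ | 0 ≤ t ∧ 1 ≤ x t} := by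
    intro x a hx
    have hcont : ContinuousOn x (Ici 0) := fun s hs =>
      (hx s hs).continuousAt.continuousWithinAt
    have : {t : ℝ | 0 ≤ t ∧ 1 ≤ x t} = Ici 0 ∩ x ⁻¹' (Ici 1) := by
      ext s; simp [Set.mem_setOf_eq, Set.mem_Ici]
    rw [this]
    exact hcont.preimage_isClosed_of_isClosed isClosed_Ici isClosed_Ici
  have hmem₀ : sInf S₀ ∈ S₀ := (hclosed x₀ a₀ hx₀).csInf_mem hne₀ hbdd₀
  have hmem₁ : sInf S₁ ∈ S₁ := (hclosed x₁ a₁ hx₁).csInf_mem hne₁ hbdd₁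
  set T₀ := sInf S₀
  set T₁ := sInf S₁
  obtain ⟨hT₀0, hxT₀⟩ := hmem₀
  have hT₀pos : 0 < T₀ := by
    rcases lt_or_eq_of_le hT₀0 with h | h
    · exact h
    · exfalso; rw [← h, hx₀0] at hxT₀; linarith
  have hbefore₀ : ∀ s, 0 ≤ s → s < T₀ → x₀ s < 1 := by
    intro s hs hst
    by_contra h
    push_neg at h
    exact absurd (csInf_le hbdd₀ ⟨hs, h⟩) (not_le.2 hst)
  have hbefore₁ : ∀ s, 0 ≤ s → s < T₁ → x₁ s < 1 := by
    intro s hs hst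
    by_contra h
    push_neg at h
    exact absurd (csInf_le hbdd₁ ⟨hs, h⟩) (not_le.2 hst)
  by_contra hT
  push_neg at hT
  -- hT : T₀ ≤ T₁
  have hcmp : x₀ T₀ < x₁ T₀ := by
    apply key T₀ hT₀pos
    intro s hs hst
    exact ⟨hbefore₀ s hs hst, hbefore₁ s hs (lt_of_lt_of_le hst hT)⟩
  have h1lt : 1 < x₁ T₀ := lt_of_le_of_lt hxT₀ hcmp
  rcases lt_or_eq_of_le hT with h | h
  · exact absurd (hbefore₁ T₀ hT₀0 h) (not_lt.2 h1lt.le)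
  · -- T₀ = T₁ : continuity argument
    have hcont : ContinuousAt x₁ T₀ := (hx₁ T₀ hT₀0).continuousAt
    have hnb : x₁ ⁻¹' (Ioi 1) ∈ nhds T₀ := hcont.preimage_mem_nhds (Ioi_mem_nhds h1lt)
    obtain ⟨ε, hε, hball⟩ := Metric.mem_nhds_iff.1 hnb
    set s := max (T₀ - ε / 2) (T₀ / 2) with hs
    have hslt : s < T₀ := max_lt (by linarith) (by linarith)
    have hs0 : 0 ≤ s := le_trans (by linarith) (le_max_right _ _)
    have hsball : s ∈ Metric.ball T₀ ε := by
      rw [Metric.mem_ball, Real.dist_eq, abs_lt]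
      constructor
      · have := le_max_left (T₀ - ε / 2) (T₀ / 2); linarith
      · linarith
    have h1s : 1 < x₁ s := hball hsball
    have : x₁ s < 1 := hbefore₁ s hs0 (h ▸ hslt)
    linarith
end

section
/- Let f ∈ C²([0,1]) and x ∈ [0,1). For ζ_{N,x} binomial with parameters N - ⌊Nx⌋ - 1 and c/N, the nonlinear generator H_N(f)(x) = log E[exp(N(f(x + 1/N + ζ_{N,x}/N) - f(x)))] converges, uniformly in x over the lattice {k/N : 0 ≤ k ≤ N} \ {1}, to H(x, f'(x)) = f'(x) + c(1-x)(e^{f'(x)} - 1) as N → ∞. -/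
open Real Finset

lemma aux_abs_exp_sub_one_le (t : ℝ) : |Real.exp t - 1| ≤ |t| * Real.exp |t| := by
  rcases le_or_gt 0 t with h | h
  · rw [abs_of_nonneg h, abs_of_nonneg (by nlinarith [Real.one_le_exp h] : (0:ℝ) ≤ Real.exp t - 1)]
    have h2 : Real.exp t * (-t + 1) ≤ Real.exp t * Real.exp (-t) :=
      mul_le_mul_of_nonneg_left (Real.add_one_le_exp (-t)) (Real.exp_pos t).le
    rw [← Real.exp_add] at h2
    simp only [add_neg_cancel, Real.exp_zero] at h2
    nlinarith
  · have h2 : Real.exp t ≤ 1 := by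
      have := Real.exp_lt_one_iff.mpr h; linarith
    rw [abs_of_neg h, abs_of_nonpos (by linarith : Real.exp t - 1 ≤ 0)]
    have h3 : (1:ℝ) ≤ Real.exp (-t) := Real.one_le_exp (by linarith)
    nlinarith [Real.add_one_le_exp t]

lemma aux_abs_log_sub (u : ℝ) (h : |u| ≤ 1/2) : |Real.log (1+u) - u| ≤ 2*u^2 := by
  obtain ⟨hl, hr⟩ := abs_le.mp h
  have h1 : (0:ℝ) < 1 + u := by linarith
  have hup : Real.log (1+u) ≤ u := by
    have := Real.log_le_sub_one_of_pos h1; linarith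
  have h3 : Real.log (1+u)⁻¹ ≤ (1+u)⁻¹ - 1 := Real.log_le_sub_one_of_pos (by positivity)
  rw [Real.log_inv] at h3
  have hinv : (1+u) * (1+u)⁻¹ = 1 := mul_inv_cancel₀ h1.ne'
  rw [abs_le]
  constructor
  · nlinarith [sq_nonneg u, inv_pos.mpr h1]
  · nlinarith [sq_nonneg u]

lemma aux_abs_log_div {a b L : ℝ} (hL : 0 < L) (ha : L ≤ a) (hb : L ≤ b) :
    |Real.log a - Real.log b| ≤ |a - b| / L := by
  have key : ∀ x y : ℝ, L ≤ x → L ≤ y → x ≤ y → Real.log y - Real.log x ≤ (y - x)/L := by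
    intro x y hx hy hxy
    have hx0 : 0 < x := lt_of_lt_of_le hL hx
    have hy0 : 0 < y := lt_of_lt_of_le hL hy
    have h1 := Real.log_le_sub_one_of_pos (show (0:ℝ) < y/x by positivity)
    rw [Real.log_div hy0.ne' hx0.ne'] at h1
    have h2 : y/x - 1 = (y-x)/x := by field_simp
    have h3 : (y-x)/x ≤ (y-x)/L := div_le_div_of_nonneg_left (by linarith) hL hx
    linarith
  rcases le_total a b with hab | hab
  · have hmono : Real.log a ≤ Real.log b :=
      (Real.log_le_log_iff (lt_of_lt_of_le hL ha) (lt_of_lt_of_le hL hb)).mpr hab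
    rw [abs_of_nonpos (by linarith : Real.log a - Real.log b ≤ 0),
      abs_of_nonpos (by linarith : a - b ≤ 0)]
    have h' : -(a-b)/L = (b-a)/L := by ring
    have := key a b ha hb hab
    linarith
  · have hmono : Real.log b ≤ Real.log a :=
      (Real.log_le_log_iff (lt_of_lt_of_le hL hb) (lt_of_lt_of_le hL ha)).mpr hab
    rw [abs_of_nonneg (by linarith : (0:ℝ) ≤ Real.log a - Real.log b),
      abs_of_nonneg (by linarith : (0:ℝ) ≤ a - b)]
    exact key b a hb ha hab

lemma aux_exp_le_one_sub {p : ℝ} (h0 : 0 ≤ p) (h : p ≤ 1/2) : Real.exp (-(2*p)) ≤ 1 - p := by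
  have h1 := Real.add_one_le_exp (2*p)
  have hinv := mul_inv_cancel₀ (Real.exp_pos (2*p)).ne'
  rw [Real.exp_neg]
  nlinarith [Real.exp_pos (2*p), inv_pos.mpr (Real.exp_pos (2*p))]

lemma aux_taylor (f : ℝ → ℝ) (M : ℝ) (hf : ContDiff ℝ 2 f)
    (hM : ∀ y ∈ Set.Icc (0:ℝ) 1, |deriv (deriv f) y| ≤ M)
    {x h : ℝ} (hx : 0 ≤ x) (hh : 0 ≤ h) (hxh : x + h ≤ 1) :
    |f (x+h) - f x - h * deriv f x| ≤ M * h^2 := by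
  have hM0 : 0 ≤ M := le_trans (abs_nonneg _) (hM 0 ⟨le_rfl, by norm_num⟩)
  have hfd : Differentiable ℝ f := hf.differentiable (by norm_num)
  have hf1 : ContDiff ℝ 1 (deriv f) := by
    have : ContDiff ℝ ((1:ℕ∞)+1) f := by norm_num; exact hf
    exact_mod_cast (contDiff_succ_iff_deriv.mp this).2.2
  have hfd1 : Differentiable ℝ (deriv f) := hf1.differentiable one_ne_zero
  have hlip : ∀ a ∈ Set.Icc (0:ℝ) 1, ∀ b ∈ Set.Icc (0:ℝ) 1,
      |deriv f b - deriv f a| ≤ M * |b - a| := by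
    intro a ha b hb
    have := (convex_Icc (0:ℝ) 1).norm_image_sub_le_of_norm_deriv_le
      (fun y _ => hfd1 y) (fun y hy => by simpa using hM y hy) ha hb
    simpa [Real.norm_eq_abs] using this
  set g : ℝ → ℝ := fun y => f y - deriv f x * y with hg
  have hgd : ∀ y, DifferentiableAt ℝ g y := by
    intro y
    exact (hfd y).sub (by fun_prop)
  have hgderiv : ∀ y, deriv g y = deriv f y - deriv f x := by
    intro y
    rw [hg]
    rw [deriv_fun_sub (hfd y) (by fun_prop)]
    have hid : deriv (fun z : ℝ => deriv f x * z) y = deriv f x := by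
      simpa using deriv_const_mul (deriv f x) (differentiableAt_id' (x := y))
    exact congrArg (f y - deriv f x * y |> fun _ => (· - ·) (deriv f y)) hid |> fun _ => by rw [show (HMul.hMul (deriv f x)) = (fun z : ℝ => deriv f x * z) from rfl, hid]
  have hbound : ∀ y ∈ Set.Icc x (x+h), ‖deriv g y‖ ≤ M * h := by
    intro y hy
    rw [hgderiv y, Real.norm_eq_abs]
    have hy01 : y ∈ Set.Icc (0:ℝ) 1 := ⟨by linarith [hy.1], by linarith [hy.2]⟩
    have := hlip x ⟨hx, by linarith⟩ y hy01
    have habs : |y - x| ≤ h := by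
      rw [abs_le]; constructor <;> [linarith [hy.1]; linarith [hy.2]]
    calc |deriv f y - deriv f x| ≤ M * |y - x| := this
      _ ≤ M * h := by nlinarith
  have key := (convex_Icc x (x+h)).norm_image_sub_le_of_norm_deriv_le
      (fun y _ => hgd y) hbound
      (Set.left_mem_Icc.mpr (by linarith)) (Set.right_mem_Icc.mpr (by linarith))
  have hgdiff : g (x+h) - g x = f (x+h) - f x - h * deriv f x := by
    simp only [hg]; ring
  rw [hgdiff] at key
  rw [Real.norm_eq_abs, Real.norm_eq_abs] at key
  have : |x + h - x| = h := by rw [abs_of_nonneg (by linarith : (0:ℝ) ≤ x + h - x)]; ring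
  rw [this] at key
  nlinarith [key]

set_option maxHeartbeats 2000000 in
theorem generator_uniform_convergence (c : ℝ) (hc : 0 < c)
    (f : ℝ → ℝ) (hf : ContDiff ℝ 2 f) :
    ∀ ε > 0, ∃ N₀ : ℕ, ∀ N : ℕ, N₀ ≤ N → c < N →
      ∀ k : ℕ, k < N →
        |Real.log (∑ j ∈ Finset.range (N - k),
            ((N - k - 1).choose j : ℝ) * (c / N) ^ j * (1 - c / N) ^ (N - k - 1 - j)
              * Real.exp ((N : ℝ) * (f ((k : ℝ) / N + (1 + (j : ℝ)) / N) - f ((k : ℝ) / N))))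
          - (deriv f ((k : ℝ) / N)
              + c * (1 - (k : ℝ) / N) * (Real.exp (deriv f ((k : ℝ) / N)) - 1))| < ε := by
  intro ε hε
  have hfd : Differentiable ℝ f := hf.differentiable (by norm_num)
  have hf1 : ContDiff ℝ 1 (deriv f) := by
    have h2 : ContDiff ℝ ((1:ℕ∞)+1) f := by norm_num; exact hf
    exact_mod_cast (contDiff_succ_iff_deriv.mp h2).2.2
  obtain ⟨A0, hA0⟩ := (isCompact_Icc (a:=(0:ℝ)) (b:=1)).exists_bound_of_continuousOn
      (hf.continuous_deriv (by norm_num)).continuousOn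
  obtain ⟨M0, hM0⟩ := (isCompact_Icc (a:=(0:ℝ)) (b:=1)).exists_bound_of_continuousOn
      (hf1.continuous_deriv le_rfl).continuousOn
  set A := max A0 0 with hAdef
  set M := max M0 0 with hMdef
  have hA : ∀ y ∈ Set.Icc (0:ℝ) 1, |deriv f y| ≤ A := fun y hy =>
    le_trans (by simpa using hA0 y hy) (le_max_left _ _)
  have hM : ∀ y ∈ Set.Icc (0:ℝ) 1, |deriv (deriv f) y| ≤ M := fun y hy =>
    le_trans (by simpa using hM0 y hy) (le_max_left _ _)
  have hA0' : (0:ℝ) ≤ A := le_max_right _ _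
  have hM0' : (0:ℝ) ≤ M := le_max_right _ _
  set B := A + M with hBdef
  set D := 4 * c * Real.exp B with hDdef
  set L := Real.exp (-(2*c + A + M)) with hLdef
  set E := Real.exp A + 1 with hEdef
  have hE2 : (2:ℝ) ≤ E := by
    have : (1:ℝ) ≤ Real.exp A := Real.one_le_exp hA0'
    rw [hEdef]; linarith
  have hD0 : 0 ≤ D := by positivity
  have hL0 : 0 < L := Real.exp_pos _
  set C := M * Real.exp B * Real.exp D / L + 2*c^2*E^2 + c*E with hCdef
  have hC0 : 0 ≤ C := by positivity
  refine ⟨⌈max (2*c*E) (C/ε)⌉₊ + 1, ?_⟩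
  intro N hNN hcN k hk
  have hN0 : (0:ℝ) < N := lt_trans hc hcN
  have hmaxN : max (2*c*E) (C/ε) < (N:ℝ) := by
    have h1 : max (2*c*E) (C/ε) ≤ (⌈max (2*c*E) (C/ε)⌉₊ : ℝ) := Nat.le_ceil _
    have h2 : (⌈max (2*c*E) (C/ε)⌉₊ : ℝ) + 1 ≤ (N:ℝ) := by exact_mod_cast hNN
    linarith
  have h2cE : 2*c*E ≤ (N:ℝ) := le_of_lt (lt_of_le_of_lt (le_max_left _ _) hmaxN)
  have hCε : C / (N:ℝ) < ε := by
    have h1 : C/ε < (N:ℝ) := lt_of_le_of_lt (le_max_right _ _) hmaxN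
    rw [div_lt_iff₀ hN0]
    rw [div_lt_iff₀ hε] at h1
    linarith
  -- lattice point setup
  set n := N - k - 1 with hndef
  have hnk : N - k = n + 1 := by omega
  have hkN : (k:ℝ) < N := by exact_mod_cast hk
  set x := (k:ℝ)/N with hxdef
  have hx0 : 0 ≤ x := by positivity
  have hx1 : x < 1 := (div_lt_one hN0).mpr hkN
  set α := deriv f x with hαdef
  set p := c/N with hpdef
  have hp0 : 0 < p := by positivity
  have hncast : (n:ℝ) = (N:ℝ) - k - 1 := by
    have h' : n + (k+1) = N := by omega
    have := congrArg (Nat.cast : ℕ → ℝ) h'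
    push_cast at this
    linarith
  have hnN : (n:ℝ) + 1 ≤ (N:ℝ) := by
    have : (0:ℝ) ≤ (k:ℝ) := Nat.cast_nonneg k
    linarith [hncast]
  have hp12 : p ≤ 1/2 := by
    rw [hpdef, div_le_iff₀ hN0]
    have h4c : 2*c*2 ≤ 2*c*E := mul_le_mul_of_nonneg_left hE2 (by linarith)
    linarith
  have h1p : 0 < 1 - p := by linarith
  have hαA : |α| ≤ A := hA x ⟨hx0, hx1.le⟩
  have hone : 1 - x = ((n:ℝ)+1)/(N:ℝ) := by
    rw [hxdef]; field_simp; linarith [hncast]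
  -- Taylor estimates
  have htay : ∀ j : ℕ, j ≤ n →
      |(N:ℝ) * (f (x + (1+(j:ℝ))/N) - f x) - (1+(j:ℝ)) * α| ≤ M * (1+(j:ℝ))^2 / N := by
    intro j hj
    have hjn : (j:ℝ) ≤ n := Nat.cast_le.mpr hj
    set h := (1+(j:ℝ))/N with hhdef
    have hh0 : 0 ≤ h := by positivity
    have hxh : x + h ≤ 1 := by
      rw [hxdef, hhdef, ← add_div, div_le_one hN0]
      linarith [hncast]
    have hT := aux_taylor f M hf hM hx0 hh0 hxh
    rw [← hαdef] at hT
    have hNh : (N:ℝ) * h = 1 + j := by rw [hhdef]; field_simp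
    have heq : (N:ℝ)*(f (x+h) - f x) - (1+(j:ℝ))*α = (N:ℝ) * (f (x+h) - f x - h*α) := by
      rw [← hNh]; ring
    rw [heq, abs_mul, abs_of_pos hN0]
    calc (N:ℝ) * |f (x+h) - f x - h*α| ≤ (N:ℝ) * (M * h^2) :=
          mul_le_mul_of_nonneg_left hT hN0.le
      _ = M * (1+(j:ℝ))^2 / N := by rw [hhdef]; field_simp
  rw [hnk]
  -- sums
  set S := ∑ j ∈ Finset.range (n+1), (n.choose j : ℝ) * p^j * (1-p)^(n-j)
      * Real.exp ((N:ℝ)*(f (x + (1+(j:ℝ))/N) - f x)) with hSdef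
  set T := ∑ j ∈ Finset.range (n+1), (n.choose j : ℝ) * p^j * (1-p)^(n-j)
      * Real.exp ((1+(j:ℝ))*α) with hTdef
  have hterm : ∀ j ∈ Finset.range (n+1),
      |(n.choose j : ℝ) * p^j * (1-p)^(n-j) * Real.exp ((N:ℝ)*(f (x + (1+(j:ℝ))/N) - f x))
        - (n.choose j : ℝ) * p^j * (1-p)^(n-j) * Real.exp ((1+(j:ℝ))*α)|
      ≤ (M * Real.exp B / N) * (D^j / (Nat.factorial j : ℝ)) := by
    intro j hj
    have hjn : j ≤ n := Nat.lt_succ_iff.mp (Finset.mem_range.mp hj)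
    have hjnR : (j:ℝ) ≤ n := Nat.cast_le.mpr hjn
    have hj1N : (1:ℝ) + j ≤ N := by linarith [hnN]
    set w : ℝ := (n.choose j : ℝ) * p^j * (1-p)^(n-j) with hwdef
    have hw0 : 0 ≤ w := by positivity
    have hwle : w ≤ c^j / (Nat.factorial j : ℝ) := by
      have h1 : (n.choose j : ℝ) ≤ (n:ℝ)^j / (Nat.factorial j : ℝ) := Nat.choose_le_pow_div j n
      have h2 : (1-p)^(n-j) ≤ 1 := pow_le_one₀ h1p.le (by linarith)
      have h3 : (n:ℝ) * p ≤ c := by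
        have hpN : p * N = c := by rw [hpdef]; field_simp
        have h4 : (n:ℝ) ≤ N := by linarith
        calc (n:ℝ)*p ≤ (N:ℝ)*p := mul_le_mul_of_nonneg_right h4 hp0.le
          _ = c := by rw [mul_comm]; exact hpN
      calc w ≤ ((n:ℝ)^j / (Nat.factorial j : ℝ)) * p^j * 1 := by
            apply mul_le_mul (mul_le_mul h1 le_rfl (by positivity) (by positivity)) h2
              (by positivity) (by positivity)
        _ = ((n:ℝ)*p)^j / (Nat.factorial j:ℝ) := by rw [mul_pow]; ring
        _ ≤ c^j / (Nat.factorial j:ℝ) := by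
            gcongr
    set g : ℝ := (N:ℝ)*(f (x + (1+(j:ℝ))/N) - f x) with hgdef
    set e : ℝ := g - (1+(j:ℝ))*α with hedef
    have he : |e| ≤ M * (1+(j:ℝ))^2 / N := htay j hjn
    have heM : |e| ≤ M * (1+(j:ℝ)) := by
      refine le_trans he ?_
      rw [div_le_iff₀ hN0]
      calc M*(1+(j:ℝ))^2 = M*(1+(j:ℝ))*(1+(j:ℝ)) := by ring
        _ ≤ M*(1+(j:ℝ))*N := mul_le_mul_of_nonneg_left hj1N (by positivity)
    have hΔ : g = (1+(j:ℝ))*α + e := by rw [hedef]; ring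
    have key : |Real.exp g - Real.exp ((1+(j:ℝ))*α)|
        ≤ Real.exp ((1+(j:ℝ))*A) * ((M * (1+(j:ℝ))^2 / N) * Real.exp (M*(1+(j:ℝ)))) := by
      rw [hΔ, Real.exp_add, show Real.exp ((1+(j:ℝ))*α) * Real.exp e - Real.exp ((1+(j:ℝ))*α)
          = Real.exp ((1+(j:ℝ))*α) * (Real.exp e - 1) by ring, abs_mul,
        abs_of_pos (Real.exp_pos _)]
      have h1 := aux_abs_exp_sub_one_le e
      have h2 : Real.exp ((1+(j:ℝ))*α) ≤ Real.exp ((1+(j:ℝ))*A) := by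
        apply Real.exp_le_exp.mpr
        exact mul_le_mul_of_nonneg_left (abs_le.mp hαA).2 (by positivity)
      have h3 : |e| * Real.exp |e| ≤ (M * (1+(j:ℝ))^2 / N) * Real.exp (M*(1+(j:ℝ))) :=
        mul_le_mul he (Real.exp_le_exp.mpr heM) (Real.exp_pos _).le (by positivity)
      calc Real.exp ((1+(j:ℝ))*α) * |Real.exp e - 1|
          ≤ Real.exp ((1+(j:ℝ))*α) * (|e| * Real.exp |e|) :=
            mul_le_mul_of_nonneg_left h1 (Real.exp_pos _).le
        _ ≤ Real.exp ((1+(j:ℝ))*A) * ((M * (1+(j:ℝ))^2 / N) * Real.exp (M*(1+(j:ℝ)))) :=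
            mul_le_mul h2 h3 (by positivity) (by positivity)
    rw [show (n.choose j : ℝ) * p^j * (1-p)^(n-j) * Real.exp g
        - (n.choose j : ℝ) * p^j * (1-p)^(n-j) * Real.exp ((1+(j:ℝ))*α)
        = w * (Real.exp g - Real.exp ((1+(j:ℝ))*α)) by rw [hwdef]; ring, abs_mul,
      abs_of_nonneg hw0]
    have h4j : ((1:ℝ)+j)^2 ≤ 4^j := by
      have hj2 : ((1:ℝ)+j) ≤ 2^j := by
        have hnat : j+1 ≤ 2^j := Nat.lt_two_pow_self
        calc ((1:ℝ)+j) = ((j+1 : ℕ):ℝ) := by push_cast; ring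
          _ ≤ ((2^j : ℕ):ℝ) := Nat.cast_le.mpr hnat
          _ = 2^j := by push_cast; ring
      calc ((1:ℝ)+j)^2 ≤ ((2:ℝ)^j)^2 :=
            pow_le_pow_left₀ (by positivity) hj2 2
        _ = 4^j := by rw [← pow_mul, mul_comm, pow_mul]; norm_num
    have hexpB : Real.exp ((1+(j:ℝ))*A) * Real.exp (M*(1+(j:ℝ)))
        = Real.exp B * (Real.exp B)^j := by
      rw [← Real.exp_nat_mul, ← Real.exp_add, ← Real.exp_add]
      congr 1
      rw [hBdef]; ring
    calc w * |Real.exp g - Real.exp ((1+(j:ℝ))*α)|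
        ≤ (c^j / (Nat.factorial j:ℝ)) *
            (Real.exp ((1+(j:ℝ))*A) * ((M * (1+(j:ℝ))^2 / N) * Real.exp (M*(1+(j:ℝ))))) :=
          mul_le_mul hwle key (abs_nonneg _) (by positivity)
      _ = (M/N) * ((1+(j:ℝ))^2 * (Real.exp B * (Real.exp B)^j * c^j)) / (Nat.factorial j : ℝ) := by
          rw [show Real.exp ((1+(j:ℝ))*A) * ((M * (1+(j:ℝ))^2 / N) * Real.exp (M*(1+(j:ℝ))))
            = (M/N) * (1+(j:ℝ))^2 * (Real.exp ((1+(j:ℝ))*A) * Real.exp (M*(1+(j:ℝ)))) by ring,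
            hexpB]
          ring
      _ ≤ (M/N) * ((4:ℝ)^j * (Real.exp B * (Real.exp B)^j * c^j)) / (Nat.factorial j : ℝ) := by
          gcongr
      _ = (M * Real.exp B / N) * (D^j / (Nat.factorial j:ℝ)) := by
          rw [hDdef, mul_pow, mul_pow]
          ring
  have hST : |S - T| ≤ M * Real.exp B * Real.exp D / N := by
    rw [hSdef, hTdef, ← Finset.sum_sub_distrib]
    refine le_trans (Finset.abs_sum_le_sum_abs _ _) ?_
    refine le_trans (Finset.sum_le_sum hterm) ?_
    rw [← Finset.mul_sum]
    have hsum : ∑ j ∈ Finset.range (n+1), D^j / (Nat.factorial j:ℝ) ≤ Real.exp D :=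
      Real.sum_le_exp_of_nonneg hD0 (n+1)
    calc (M * Real.exp B / N) * ∑ j ∈ Finset.range (n+1), D^j/(Nat.factorial j:ℝ)
        ≤ (M * Real.exp B / N) * Real.exp D :=
          mul_le_mul_of_nonneg_left hsum (by positivity)
      _ = M * Real.exp B * Real.exp D / N := by ring
  set q := 1 - p + p * Real.exp α with hqdef
  set u := p * (Real.exp α - 1) with hudef
  have hqu : q = 1 + u := by rw [hqdef, hudef]; ring
  have huabs : |u| ≤ c * E / N := by
    have heα : |Real.exp α - 1| ≤ E := by
      have h1 : Real.exp α ≤ Real.exp A := Real.exp_le_exp.mpr (le_trans (le_abs_self α) hαA)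
      have h2 : 0 < Real.exp α := Real.exp_pos α
      rw [abs_le, hEdef]
      constructor <;> linarith
    rw [hudef, abs_mul, abs_of_pos hp0, hpdef]
    calc c/N * |Real.exp α - 1| ≤ c/N * E := by
          apply mul_le_mul_of_nonneg_left heα (by positivity)
      _ = c*E/N := by ring
  have hu12 : |u| ≤ 1/2 := by
    refine le_trans huabs ?_
    rw [div_le_iff₀ hN0]
    calc c*E = (2*c*E)/2 := by ring
      _ ≤ (N:ℝ)/2 := by gcongr
      _ = 1/2 * N := by ring
  have hq0 : 0 < q := by
    have := abs_le.mp hu12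
    rw [hqu]; linarith [this.1]
  have hTval : T = Real.exp α * q^n := by
    rw [hTdef, show q = p * Real.exp α + (1-p) by rw [hqdef]; ring, add_pow, Finset.mul_sum]
    refine Finset.sum_congr rfl ?_
    intro j hj
    rw [mul_pow, show (1+(j:ℝ))*α = α + (j:ℝ)*α by ring, Real.exp_add, Real.exp_nat_mul]
    ring
  have hqlow : Real.exp (-(2*p)) ≤ 1 - p := aux_exp_le_one_sub hp0.le hp12
  have hpN : p * N = c := by rw [hpdef]; field_simp
  have hpow : Real.exp (-(2*c)) ≤ (1-p)^n := by
    calc Real.exp (-(2*c)) ≤ Real.exp ((n:ℝ) * (-(2*p))) := by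
          apply Real.exp_le_exp.mpr
          have hnp : (n:ℝ)*p ≤ c := by
            have h4 : (n:ℝ) ≤ N := by linarith
            calc (n:ℝ)*p ≤ (N:ℝ)*p := mul_le_mul_of_nonneg_right h4 hp0.le
              _ = c := by rw [mul_comm]; exact hpN
          have heq2 : (n:ℝ)*(-(2*p)) = -(2*((n:ℝ)*p)) := by ring
          rw [heq2]
          linarith
      _ = (Real.exp (-(2*p)))^n := Real.exp_nat_mul _ n
      _ ≤ (1-p)^n := pow_le_pow_left₀ (Real.exp_pos _).le hqlow n
  have hαlow : Real.exp (-A) ≤ Real.exp α := Real.exp_le_exp.mpr (by linarith [(abs_le.mp hαA).1])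
  have hTL : L ≤ T := by
    have hq1 : 1 - p ≤ q := by
      rw [hqdef]
      linarith [mul_nonneg hp0.le (Real.exp_pos α).le]
    have hqn : Real.exp (-(2*c)) ≤ q^n := le_trans hpow (pow_le_pow_left₀ h1p.le hq1 n)
    have h1 : L ≤ Real.exp (-A) * Real.exp (-(2*c)) := by
      rw [hLdef, ← Real.exp_add]
      apply Real.exp_le_exp.mpr
      linarith
    refine le_trans h1 ?_
    rw [hTval]
    exact mul_le_mul hαlow hqn (Real.exp_pos _).le (Real.exp_pos _).le
  have hSL : L ≤ S := by
    have h0mem : 0 ∈ Finset.range (n+1) := Finset.mem_range.mpr (Nat.succ_pos n)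
    have hsingle := Finset.single_le_sum
      (f := fun j : ℕ => (n.choose j : ℝ) * p^j * (1-p)^(n-j)
        * Real.exp ((N:ℝ)*(f (x + (1+(j:ℝ))/N) - f x)))
      (fun j _ => by positivity) h0mem
    rw [← hSdef] at hsingle
    refine le_trans ?_ hsingle
    have hg0 := htay 0 (Nat.zero_le n)
    norm_num at hg0 ⊢
    have hN1 : (1:ℝ) ≤ N := by
      have h1 : (1:ℕ) ≤ N := by omega
      exact_mod_cast h1
    have hMN : M / N ≤ M := by
      rw [div_le_iff₀ hN0]
      have h1 : M * 1 ≤ M * N := mul_le_mul_of_nonneg_left hN1 hM0'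
      linarith only [h1]
    have hg0' : -(A+M) ≤ (N:ℝ)*(f (x + (1+((0:ℕ):ℝ))/N) - f x) := by
      have h1 := (abs_le.mp hg0).1
      have h2 := (abs_le.mp hαA).1
      norm_num
      linarith only [h1, h2, hMN]
    have hLsplit : L = Real.exp (-(2*c)) * Real.exp (-(A+M)) := by
      rw [hLdef, ← Real.exp_add]; congr 1; ring
    rw [hLsplit]
    refine mul_le_mul hpow (Real.exp_le_exp.mpr ?_) (Real.exp_pos _).le (by positivity)
    norm_num at hg0' ⊢
    exact hg0'
  have hlogT : Real.log T = α + n * Real.log q := by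
    rw [hTval, Real.log_mul (Real.exp_ne_zero _) (pow_ne_zero _ hq0.ne'), Real.log_exp,
      Real.log_pow]
  have htarget : α + c * (1-x) * (Real.exp α - 1) = α + ((n:ℝ)+1) * u := by
    rw [hone, hudef, hpdef]; ring
  have hlogTtgt : |Real.log T - (α + c * (1-x) * (Real.exp α - 1))| ≤ (2*c^2*E^2 + c*E)/N := by
    rw [hlogT, htarget]
    have h1 : α + (n:ℝ)*Real.log q - (α + ((n:ℝ)+1)*u) = (n:ℝ)*(Real.log (1+u) - u) - u := by
      rw [hqu]; ring
    rw [h1]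
    have h2 := aux_abs_log_sub u hu12
    have h3 : |(n:ℝ)*(Real.log (1+u) - u) - u| ≤ (n:ℝ)*|Real.log (1+u) - u| + |u| := by
      calc |(n:ℝ)*(Real.log (1+u) - u) - u|
          ≤ |(n:ℝ)*(Real.log (1+u) - u)| + |-u| := by
            rw [sub_eq_add_neg]; exact abs_add_le _ _
        _ = (n:ℝ)*|Real.log (1+u) - u| + |u| := by rw [abs_neg, abs_mul, Nat.abs_cast]
    have hu2 : u^2 ≤ (c*E/N)^2 := by
      rw [← sq_abs]
      exact pow_le_pow_left₀ (abs_nonneg u) huabs 2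
    have h4 : (n:ℝ)*|Real.log (1+u) - u| ≤ (N:ℝ) * (2*u^2) := by
      apply mul_le_mul (by linarith [hnN]) h2 (abs_nonneg _) hN0.le
    have h5 : (N:ℝ)*(2*u^2) ≤ 2*c^2*E^2/N := by
      calc (N:ℝ)*(2*u^2) ≤ (N:ℝ)*(2*(c*E/N)^2) := by
            apply mul_le_mul_of_nonneg_left (by linarith) hN0.le
        _ = 2*c^2*E^2/N * ((N:ℝ)/N) := by field_simp
        _ = 2*c^2*E^2/N := by rw [div_self hN0.ne']; ring
    calc |(n:ℝ)*(Real.log (1+u) - u) - u| ≤ (n:ℝ)*|Real.log (1+u) - u| + |u| := h3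
      _ ≤ 2*c^2*E^2/N + c*E/N := by linarith
      _ = (2*c^2*E^2 + c*E)/N := by ring
  have hlogST : |Real.log S - Real.log T| ≤ (M * Real.exp B * Real.exp D / L) / N := by
    refine le_trans (aux_abs_log_div hL0 hSL hTL) ?_
    have heq : (M * Real.exp B * Real.exp D / L) / N
        = (M * Real.exp B * Real.exp D / N) / L := by ring
    rw [heq]
    gcongr
  calc |Real.log S - (α + c * (1-x) * (Real.exp α - 1))|
      ≤ |Real.log S - Real.log T| + |Real.log T - (α + c * (1-x) * (Real.exp α - 1))| :=
        abs_sub_le _ _ _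
    _ ≤ (M * Real.exp B * Real.exp D / L) / N + (2*c^2*E^2 + c*E)/N := add_le_add hlogST hlogTtgt
    _ = C/N := by rw [hCdef]; ring
    _ < ε := hCε
end
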